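/- Let 𝔉 be a family of subsets of ℕ. The following are equivalent: (1) 𝔉 is a proper, idempotent filter that is maximal with respect to inclusion among proper, idempotent filters; (2) 𝔉 is an ultrafilter and 𝔉 ⊆ 𝔉 + 𝔉; (3) 𝔉 is an ultrafilter and 𝔉 = 𝔉 + 𝔉. In particular, every proper, idempotent filter is contained in an idempotent ultrafilter. -/
import Mathlib


open Set

/-- `A − n` computed inside the positive integers. -/
def shiftN (A : Set ℕ+) (n : ℕ+) : Set ℕ+ := {m : ℕ+ | m + n ∈ A}

/-- `A − B := ⋃_{b ∈ B} (A − b)`. -/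
def shiftSet (A B : Set ℕ+) : Set ℕ+ := ⋃ b ∈ B, shiftN A b

/-- A set of positive integers is syndetic if `A ∪ (A−1) ∪ ⋯ ∪ (A−N) = ℕ` for some `N`. -/
def Syndetic (A : Set ℕ+) : Prop :=
  ∃ N : ℕ+, (A ∪ ⋃ k ∈ {k : ℕ+ | k ≤ N}, shiftN A k) = Set.univ

/-- A set of positive integers is thick if it contains a translate of every finite set. -/
def Thick (A : Set ℕ+) : Prop :=
  ∀ F : Finset ℕ+, ∃ n : ℕ+, ∀ f ∈ F, f + n ∈ A

/-- Piecewise syndetic: some finite union of translates `A ∪ (A−1) ∪ ⋯ ∪ (A−N)` is thick. -/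
def PiecewiseSyndetic (A : Set ℕ+) : Prop :=
  ∃ N : ℕ+, Thick (A ∪ ⋃ k ∈ {k : ℕ+ | k ≤ N}, shiftN A k)

/-- A self-map of a topological space is minimal if every forward orbit
`{T^n x | n ∈ ℕ, n ≥ 1}` is dense. -/
def MinimalMap {X : Type} [TopologicalSpace X] (T : X → X) : Prop :=
  ∀ x : X, Dense (Set.range fun n : ℕ+ => T^[(n : ℕ)] x)

/-- A minimal topological dynamical system: a nonempty compact metric space together with a
continuous map all of whose forward orbits are dense. -/
structure MinSystem : Type 1 where
  X : Type
  [met : MetricSpace X]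
  [cpt : CompactSpace X]
  [nem : Nonempty X]
  T : X → X
  cont : Continuous T
  minimal : MinimalMap T

attribute [instance] MinSystem.met MinSystem.cpt MinSystem.nem

/-- `R(x,U)`: the set of (positive) return times of `x` to `U`. -/
def retTimes {X : Type} (T : X → X) (x : X) (U : Set X) : Set ℕ+ :=
  {n : ℕ+ | T^[(n : ℕ)] x ∈ U}

/-- Dynamically syndetic sets. -/
def DynSyndetic (A : Set ℕ+) : Prop :=
  ∃ (S : MinSystem) (x : S.X) (U : Set S.X),
    IsOpen U ∧ U.Nonempty ∧ retTimes S.T x U ⊆ A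

/-- Dynamically central syndetic sets. -/
def DynCentralSyndetic (A : Set ℕ+) : Prop :=
  ∃ (S : MinSystem) (x : S.X) (U : Set S.X),
    IsOpen U ∧ x ∈ U ∧ retTimes S.T x U ⊆ A

/-- Dynamically thick sets: `{T^n x | n ∈ A}` is dense for every minimal system and point. -/
def DynThick (A : Set ℕ+) : Prop :=
  ∀ (S : MinSystem) (x : S.X), Dense ((fun n : ℕ+ => S.T^[(n : ℕ)] x) '' A)

/-- Sets of (minimal topological) pointwise recurrence. -/
def PointwiseRecurrent (A : Set ℕ+) : Prop :=
  ∀ (S : MinSystem) (x : S.X) (U : Set S.X), IsOpen U → x ∈ U →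
    ∃ a ∈ A, S.T^[(a : ℕ)] x ∈ U

/-- A family: an upward-closed collection of subsets of the positive integers. -/
def UpwardClosed (F : Set (Set ℕ+)) : Prop :=
  ∀ ⦃A B : Set ℕ+⦄, A ∈ F → A ⊆ B → B ∈ F

/-- A filter (in the combinatorial sense): an upward-closed collection closed under
finite intersections. -/
def IsFilterFamily (F : Set (Set ℕ+)) : Prop :=
  UpwardClosed F ∧ ∀ ⦃A B : Set ℕ+⦄, A ∈ F → B ∈ F → A ∩ B ∈ F

/-- A family all of whose members are syndetic. -/
def SyndeticFamily (F : Set (Set ℕ+)) : Prop := ∀ A ∈ F, Syndetic A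

/-- `A − 𝔉 := {n | A − n ∈ 𝔉}`. -/
def famShift (A : Set ℕ+) (F : Set (Set ℕ+)) : Set ℕ+ := {n : ℕ+ | shiftN A n ∈ F}

/-- `𝔉 + 𝔊 := {A | A − 𝔊 ∈ 𝔉}`. -/
def famSum (F G : Set (Set ℕ+)) : Set (Set ℕ+) := {A : Set ℕ+ | famShift A G ∈ F}

/-- A family is idempotent if `𝔉 ⊆ 𝔉 + 𝔉`. -/
def IdempotentFamily (F : Set (Set ℕ+)) : Prop := F ⊆ famSum F F

/-- A proper family: nonempty and not containing the empty set. -/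
def ProperFamily (F : Set (Set ℕ+)) : Prop := F.Nonempty ∧ ∅ ∉ F

/-- An ultrafilter on `ℕ`, viewed combinatorially: a proper filter of subsets such that for
every set either it or its complement is a member. -/
def IsUltra (p : Set (Set ℕ+)) : Prop :=
  IsFilterFamily p ∧ p.Nonempty ∧ ∅ ∉ p ∧ ∀ S : Set ℕ+, S ∈ p ∨ Sᶜ ∈ p

section Aux

open Filter

attribute [local instance] Ultrafilter.add Ultrafilter.addSemigroup

/-- The combinatorial family of an ultrafilter. -/
def ufam (u : Ultrafilter ℕ+) : Set (Set ℕ+) := {A | A ∈ u}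

lemma isUltra_ufam (u : Ultrafilter ℕ+) : IsUltra (ufam u) := by
  refine ⟨⟨fun A B hA hAB => u.mem_of_superset hA hAB,
    fun A B hA hB => by exact Filter.inter_mem hA hB⟩,
    ⟨Set.univ, Filter.univ_mem⟩, u.empty_notMem,
    fun S => u.mem_or_compl_mem S⟩

lemma famSum_ufam (u v : Ultrafilter ℕ+) : famSum (ufam u) (ufam v) = ufam (u + v) := by
  ext A
  have key : (A ∈ u + v) ↔ ∀ᶠ m in (u : Filter ℕ+), ∀ᶠ m' in (v : Filter ℕ+), m + m' ∈ A := by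
    rw [← Ultrafilter.mem_coe, ← Filter.eventually_mem_set]
    exact Ultrafilter.eventually_add u v (· ∈ A)
  simp only [ufam, famSum, famShift, shiftN, Set.mem_setOf_eq]
  rw [key]
  constructor
  · intro h
    have h' : ∀ᶠ n in (u : Filter ℕ+), {m | m + n ∈ A} ∈ v := h
    refine h'.mono fun n hn => ?_
    have h'' : ∀ᶠ m in (v : Filter ℕ+), m + n ∈ A := hn
    exact h''.mono fun m hm => by simpa [add_comm] using hm
  · intro h
    refine h.mono fun n hn => ?_
    show {m | m + n ∈ A} ∈ v
    exact hn.mono fun m hm => by simpa [add_comm] using hm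

/-- Any filter family containing an ultrafilter family equals it. -/
lemma ultra_maximal {p q : Set (Set ℕ+)} (hp : IsUltra p) (hqf : IsFilterFamily q)
    (hqprop : ∅ ∉ q) (hpq : p ⊆ q) : q = p := by
  apply Set.Subset.antisymm _ hpq
  intro A hA
  rcases hp.2.2.2 A with h | h
  · exact h
  · exfalso
    have : A ∩ Aᶜ ∈ q := hqf.2 hA (hpq h)
    rw [Set.inter_compl_self] at this
    exact hqprop this

lemma isUltra_isFilterFamily {p : Set (Set ℕ+)} (hp : IsUltra p) : IsFilterFamily p := hp.1

lemma isUltra_proper {p : Set (Set ℕ+)} (hp : IsUltra p) : ProperFamily p :=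
  ⟨hp.2.1, hp.2.2.1⟩

/-- famSum of two ultrafilter families is an ultrafilter family. -/
lemma isUltra_famSum {p q : Set (Set ℕ+)} (hp : IsUltra p) (hq : IsUltra q) :
    IsUltra (famSum p q) := by
  have shift_compl : ∀ (A : Set ℕ+) (n : ℕ+), shiftN Aᶜ n = (shiftN A n)ᶜ := fun A n => rfl
  have hshift : ∀ (A : Set ℕ+), famShift Aᶜ q = (famShift A q)ᶜ := by
    intro A
    ext n
    simp only [famShift, shift_compl, Set.mem_setOf_eq, Set.mem_compl_iff]
    constructor
    · intro h hA
      exact hq.2.2.1 (by simpa using hq.1.2 h hA : (∅ : Set ℕ+) ∈ q)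
    · intro h
      rcases hq.2.2.2 (shiftN A n) with h' | h'
      · exact absurd h' h
      · exact h'
  have mono : ∀ {A B : Set ℕ+}, A ⊆ B → famShift A q ⊆ famShift B q := by
    intro A B hAB n hn
    exact hq.1.1 hn (fun m hm => hAB hm)
  refine ⟨⟨fun A B hA hAB => hp.1.1 hA (mono hAB), ?_⟩, ?_, ?_, ?_⟩
  · intro A B hA hB
    have : famShift A q ∩ famShift B q ⊆ famShift (A ∩ B) q := by
      intro n ⟨h1, h2⟩
      exact hq.1.2 h1 h2
    exact hp.1.1 (hp.1.2 hA hB) this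
  · refine ⟨Set.univ, ?_⟩
    have : famShift Set.univ q = Set.univ := by
      ext n
      simp only [famShift, Set.mem_setOf_eq, Set.mem_univ, iff_true]
      have huniv : (Set.univ : Set ℕ+) ∈ q := by
        obtain ⟨A, hA⟩ := hq.2.1
        exact hq.1.1 hA (Set.subset_univ A)
      exact hq.1.1 huniv (Set.subset_univ _)
    show famShift Set.univ q ∈ p
    rw [this]
    obtain ⟨A, hA⟩ := hp.2.1
    exact hp.1.1 hA (Set.subset_univ A)
  · intro h
    have : famShift (∅ : Set ℕ+) q = ∅ := by
      ext n
      simp only [famShift, Set.mem_setOf_eq, Set.mem_empty_iff_false, iff_false]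
      intro hc
      exact hq.2.2.1 (by simpa [shiftN] using hc : (∅ : Set ℕ+) ∈ q)
    have h' : famShift (∅ : Set ℕ+) q ∈ p := h
    rw [this] at h'
    exact hp.2.2.1 h'
  · intro S
    rcases hp.2.2.2 (famShift S q) with h | h
    · exact Or.inl h
    · right
      show famShift Sᶜ q ∈ p
      rw [hshift]
      exact h

/-- Core existence result: every proper idempotent filter family extends to an
idempotent ultrafilter family. -/
lemma exists_idempotent_ultra_ext {𝓖 : Set (Set ℕ+)} (hF : IsFilterFamily 𝓖)
    (hP : ProperFamily 𝓖) (hI : IdempotentFamily 𝓖) :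
    ∃ p : Set (Set ℕ+), IsUltra p ∧ famSum p p = p ∧ 𝓖 ⊆ p := by
  have huniv : (Set.univ : Set ℕ+) ∈ 𝓖 := by
    obtain ⟨A, hA⟩ := hP.1
    exact hF.1 hA (Set.subset_univ A)
  -- the filter generated by 𝓖
  let f : Filter ℕ+ :=
    { sets := 𝓖
      univ_sets := huniv
      sets_of_superset := fun h h' => hF.1 h h'
      inter_sets := fun h h' => hF.2 h h' }
  have hfne : f.NeBot :=
    ⟨fun h => hP.2 (Filter.empty_mem_iff_bot.mpr h : (∅ : Set ℕ+) ∈ f)⟩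
  -- the set of ultrafilters extending 𝓖
  let S : Set (Ultrafilter ℕ+) := {u | ∀ A ∈ 𝓖, A ∈ u}
  have hSne : S.Nonempty := by
    obtain ⟨u, hu⟩ := Ultrafilter.exists_le f
    exact ⟨u, fun A hA => hu hA⟩
  have hSclosed : IsClosed S := by
    have : S = ⋂ A ∈ 𝓖, {u : Ultrafilter ℕ+ | A ∈ u} := by
      ext u; simp [S]
    rw [this]
    exact isClosed_biInter fun A _ => ultrafilter_isClosed_basic A
  have hScompact : IsCompact S := hSclosed.isCompact
  have hSadd : ∀ u ∈ S, ∀ v ∈ S, u + v ∈ S := by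
    intro u hu v hv A hA
    have h1 : famShift A 𝓖 ∈ 𝓖 := hI hA
    have h2 : famShift A 𝓖 ⊆ famShift A (ufam v) := by
      intro n hn
      exact hv _ hn
    have h3 : famShift A (ufam v) ∈ u := u.mem_of_superset (hu _ h1) h2
    have : A ∈ famSum (ufam u) (ufam v) := h3
    rw [famSum_ufam] at this
    exact this
  obtain ⟨u, huS, huidem⟩ :=
    exists_idempotent_in_compact_add_subsemigroup Ultrafilter.continuous_add_left S hSne
      hScompact hSadd
  refine ⟨ufam u, isUltra_ufam u, ?_, fun A hA => huS A hA⟩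
  rw [famSum_ufam, huidem]

end Aux

/-- **Theorem (maximal idempotent filters are idempotent ultrafilters).**
For a family `𝔉` the following are equivalent:
(1) `𝔉` is a proper, idempotent filter that is maximal among proper, idempotent filters;
(2) `𝔉` is an ultrafilter with `𝔉 ⊆ 𝔉 + 𝔉`;
(3) `𝔉` is an ultrafilter with `𝔉 = 𝔉 + 𝔉`.
In particular, every proper, idempotent filter is contained in an idempotent ultrafilter. -/
theorem maximal_idempotent_filter_iff_idempotent_ultrafilter (𝓕 : Set (Set ℕ+)) :
    ((IsFilterFamily 𝓕 ∧ ProperFamily 𝓕 ∧ IdempotentFamily 𝓕 ∧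
        ∀ 𝓖 : Set (Set ℕ+), IsFilterFamily 𝓖 → ProperFamily 𝓖 → IdempotentFamily 𝓖 →
          𝓕 ⊆ 𝓖 → 𝓖 = 𝓕) ↔
      (IsUltra 𝓕 ∧ 𝓕 ⊆ famSum 𝓕 𝓕)) ∧
    ((IsUltra 𝓕 ∧ 𝓕 ⊆ famSum 𝓕 𝓕) ↔ (IsUltra 𝓕 ∧ famSum 𝓕 𝓕 = 𝓕)) ∧
    (∀ 𝓖 : Set (Set ℕ+), IsFilterFamily 𝓖 → ProperFamily 𝓖 → IdempotentFamily 𝓖 →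
      ∃ p : Set (Set ℕ+), IsUltra p ∧ famSum p p = p ∧ 𝓖 ⊆ p) := by
  constructor
  · constructor
    · rintro ⟨hF, hP, hI, hmax⟩
      obtain ⟨p, hpU, hpidem, hsub⟩ := exists_idempotent_ultra_ext hF hP hI
      have hpeq : p = 𝓕 :=
        hmax p (isUltra_isFilterFamily hpU) (isUltra_proper hpU)
          (by rw [IdempotentFamily, hpidem]) hsub
      rw [← hpeq]
      exact ⟨hpU, by rw [hpidem]⟩
    · rintro ⟨hU, hidem⟩
      refine ⟨hU.1, isUltra_proper hU, hidem, ?_⟩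
      intro 𝓖 hGf hGp _ hsub
      exact ultra_maximal hU hGf hGp.2 hsub
  constructor
  · constructor
    · rintro ⟨hU, hidem⟩
      refine ⟨hU, ?_⟩
      have h2 : IsUltra (famSum 𝓕 𝓕) := isUltra_famSum hU hU
      exact ultra_maximal hU h2.1 h2.2.2.1 hidem
    · rintro ⟨hU, heq⟩
      exact ⟨hU, heq.symm ▸ Set.Subset.rfl⟩
  · exact fun 𝓖 h1 h2 h3 => exists_idempotent_ultra_ext h1 h2 h3
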